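/- The set M = {(0,x,0,y) : x,y ∈ ℝ_{>0}} is invariant under the four-dimensional Yang–Baxter map R̃_{α,β} determined by the Lax matrix L̃(x₁,x₂,α,ζ) = [[ζ/α + x₁, x₂],[(1−x₁²)/x₂, ζ/α − x₁]]: if x₁ = y₁ = 0 then the images satisfy u₁ = v₁ = 0, and on M the map R̃_{α,β} reduces to R_{α,β}(x₂,y₂) = (y₂(αx₂+βy₂)/(βx₂+αy₂), x₂(αx₂+βy₂)/(βx₂+αy₂)) up to the equivalence of Lax matrices. -/

import Mathlib

open Matrix

/-- The Lax matrix `L̃(x₁,x₂,α,ζ) = [[ζ/α + x₁, x₂],[(1−x₁²)/x₂, ζ/α − x₁]]`. -/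
noncomputable def LaxT (x₁ x₂ α ζ : ℝ) : Matrix (Fin 2) (Fin 2) ℝ :=
  !![ζ / α + x₁, x₂; (1 - x₁ ^ 2) / x₂, ζ / α - x₁]

/-- The manifold `{(0,x,0,y) : x,y > 0}` is invariant under the four-dimensional
Yang–Baxter map `R̃_{α,β}` defined by the Lax equation for `L̃`, and on it the map
reduces to `R_{α,β}(x₂,y₂) = (y₂(αx₂+βy₂)/(βx₂+αy₂), x₂(αx₂+βy₂)/(βx₂+αy₂))`:
if `x₁ = y₁ = 0`, then the image satisfies `u₁ = v₁ = 0` and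
`(u₂,v₂) = R_{α,β}(x₂,y₂)`. -/
theorem invariant_manifold_reduction (α β x₂ y₂ u₁ u₂ v₁ v₂ : ℝ)
    (hα : 0 < α) (hβ : 0 < β) (hx₂ : 0 < x₂) (hy₂ : 0 < y₂)
    (hu₂ : 0 < u₂) (hv₂ : 0 < v₂)
    (h : ∀ ζ : ℝ, LaxT u₁ u₂ α ζ * LaxT v₁ v₂ β ζ = LaxT 0 y₂ β ζ * LaxT 0 x₂ α ζ) :
    u₁ = 0 ∧ v₁ = 0 ∧
    u₂ = y₂ * (α * x₂ + β * y₂) / (β * x₂ + α * y₂) ∧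
    v₂ = x₂ * (α * x₂ + β * y₂) / (β * x₂ + α * y₂) := by
  have hα' := hα.ne'
  have hβ' := hβ.ne'
  have hx' := hx₂.ne'
  have hy' := hy₂.ne'
  have hu' := hu₂.ne'
  have hv' := hv₂.ne'
  have e00_0 := congrFun (congrFun (h 0) 0) 0
  have e00_1 := congrFun (congrFun (h 1) 0) 0
  have e01_0 := congrFun (congrFun (h 0) 0) 1
  have e01_1 := congrFun (congrFun (h 1) 0) 1
  simp [LaxT, Matrix.mul_apply, Fin.sum_univ_two] at e00_0 e00_1 e01_0 e01_1
  -- A : β v₁ + α u₁ = 0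
  have A : β * v₁ + α * u₁ = 0 := by
    have h1 : α⁻¹ * v₁ + u₁ * β⁻¹ = 0 := by linear_combination e00_1 - e00_0
    field_simp at h1
    linarith
  -- B : u₁ v₂ = u₂ v₁
  have B : u₁ * v₂ = u₂ * v₁ := by linarith [e01_0]
  have key : u₁ * (β * v₂ + α * u₂) = 0 := by nlinarith [A, B]
  have hpos : (0:ℝ) < β * v₂ + α * u₂ := by positivity
  have hu₁ : u₁ = 0 := by
    rcases mul_eq_zero.mp key with h1 | h1
    · exact h1
    · linarith
  have hv₁ : v₁ = 0 := by
    rw [hu₁] at A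
    have : β * v₁ = 0 := by linarith
    exact (mul_eq_zero.mp this).resolve_left hβ'
  subst hu₁; subst hv₁
  simp at e00_0 e01_1
  have C : u₂ * x₂ = y₂ * v₂ := by
    field_simp at e00_0
    linarith
  have D : β * v₂ + α * u₂ = α * x₂ + β * y₂ := by
    field_simp at e01_1
    apply mul_right_cancel₀ (show (β * α : ℝ) ≠ 0 by positivity)
    linear_combination (β * α) * e01_1
  have hden : (0:ℝ) < β * x₂ + α * y₂ := by positivity
  refine ⟨rfl, rfl, ?_, ?_⟩
  · rw [eq_div_iff hden.ne']
    nlinarith [C, D]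
  · rw [eq_div_iff hden.ne']
    nlinarith [C, D]
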